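/- arXiv:2112.05912 — 4 statements merged into one kernel-verified Lean document; each statement's English description precedes it below -/
import Mathlib

section
/- For a smooth vector field f on ℝⁿ, suppose the symmetric part of the Jacobian of f is uniformly bounded above by -λ (with λ > 0) in the sense that for all x and v, vᵀ (Df(x))_s v ≤ -λ ‖v‖². Then for any two solutions x₁(t), x₂(t) of ẋ = f(x), the distance satisfies ‖x₁(t) - x₂(t)‖ ≤ ‖x₁(0) - x₂(0)‖ · e^{-λ t}, i.e., the two trajectories converge exponentially to each other. -/
theorem contraction_exponential_convergence {n : ℕ}
    (f : EuclideanSpace ℝ (Fin n) → EuclideanSpace ℝ (Fin n))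
    (hf : ContDiff ℝ 1 f) (lam : ℝ) (hlam : 0 < lam)
    (hcontract : ∀ x v : EuclideanSpace ℝ (Fin n),
      @inner ℝ _ _ (fderiv ℝ f x v) v ≤ -lam * ‖v‖ ^ 2)
    (x₁ x₂ : ℝ → EuclideanSpace ℝ (Fin n))
    (hx₁ : ∀ t : ℝ, HasDerivAt x₁ (f (x₁ t)) t)
    (hx₂ : ∀ t : ℝ, HasDerivAt x₂ (f (x₂ t)) t) :
    ∀ t : ℝ, 0 ≤ t →
      ‖x₁ t - x₂ t‖ ≤ ‖x₁ 0 - x₂ 0‖ * Real.exp (-lam * t) := by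
  -- key one-sided Lipschitz estimate
  have key : ∀ a b : EuclideanSpace ℝ (Fin n),
      @inner ℝ _ _ (f a - f b) (a - b) ≤ -lam * ‖a - b‖ ^ 2 := by
    intro a b
    set v : EuclideanSpace ℝ (Fin n) := a - b with hv
    set C : ℝ := -lam * ‖v‖ ^ 2 with hC
    set φ : ℝ → ℝ := fun s => @inner ℝ _ _ (f (b + s • v)) v with hφdef
    have hγ : ∀ s : ℝ, HasDerivAt (fun s : ℝ => b + s • v) v s := by
      intro s
      simpa using ((hasDerivAt_id s).smul_const v).const_add b
    have hφ' : ∀ s : ℝ, HasDerivAt φ (@inner ℝ _ _ (fderiv ℝ f (b + s • v) v) v) s := by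
      intro s
      have hfd : HasFDerivAt f (fderiv ℝ f (b + s • v)) (b + s • v) :=
        (hf.differentiable one_ne_zero (b + s • v)).hasFDerivAt
      have hcomp : HasDerivAt (fun s : ℝ => f (b + s • v)) (fderiv ℝ f (b + s • v) v) s :=
        hfd.comp_hasDerivAt s (hγ s)
      simpa using hcomp.inner ℝ (hasDerivAt_const s v)
    have hψ : Monotone (fun s : ℝ => C * s - φ s) := by
      apply monotone_of_hasDerivAt_nonneg
        (f' := fun s => C - @inner ℝ _ _ (fderiv ℝ f (b + s • v) v) v)
      · intro s
        have h1 := ((hasDerivAt_id s).const_mul C).sub (hφ' s)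
        rw [mul_one] at h1
        exact h1
      · intro s
        simp only [Pi.zero_apply, sub_nonneg, hC]
        exact hcontract _ _
    have h01 : C * 0 - φ 0 ≤ C * 1 - φ 1 := hψ zero_le_one
    have hφ0 : φ 0 = @inner ℝ _ _ (f b) v := by simp [hφdef]
    have hφ1 : φ 1 = @inner ℝ _ _ (f a) v := by simp [hφdef, hv]
    have := h01
    rw [hφ0, hφ1] at this
    have : @inner ℝ _ _ (f a) v - @inner ℝ _ _ (f b) v ≤ C := by linarith
    rwa [← inner_sub_left] at this
  -- set up y and the squared-norm function
  set y : ℝ → EuclideanSpace ℝ (Fin n) := fun t => x₁ t - x₂ t with hy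
  have hdy : ∀ s, HasDerivAt y (f (x₁ s) - f (x₂ s)) s := fun s => (hx₁ s).sub (hx₂ s)
  set g : ℝ → ℝ := fun t => @inner ℝ _ _ (y t) (y t) with hg
  have hg' : ∀ s, HasDerivAt g (2 * @inner ℝ _ _ (f (x₁ s) - f (x₂ s)) (y s)) s := by
    intro s
    have := (hdy s).inner ℝ (hdy s)
    have hcomm : @inner ℝ _ _ (y s) (f (x₁ s) - f (x₂ s))
        = @inner ℝ _ _ (f (x₁ s) - f (x₂ s)) (y s) := real_inner_comm _ _
    rw [hcomm, ← two_mul] at this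
    exact this
  have hgnorm : ∀ s, g s = ‖y s‖ ^ 2 := fun s => real_inner_self_eq_norm_sq (y s)
  -- h t = g t * exp (2 lam t) is antitone
  set h : ℝ → ℝ := fun t => g t * Real.exp (2 * lam * t) with hh
  have hanti : Antitone h := by
    apply antitone_of_hasDerivAt_nonpos
      (f' := fun s => 2 * @inner ℝ _ _ (f (x₁ s) - f (x₂ s)) (y s) * Real.exp (2 * lam * s)
        + g s * (2 * lam * Real.exp (2 * lam * s)))
    · intro s
      have hexp : HasDerivAt (fun t : ℝ => Real.exp (2 * lam * t))
          (2 * lam * Real.exp (2 * lam * s)) s := by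
        have h1 : HasDerivAt (fun t : ℝ => 2 * lam * t) (2 * lam) s := by
          simpa using (hasDerivAt_id s).const_mul (2 * lam)
        simpa [mul_comm] using h1.exp
      exact (hg' s).mul hexp
    · intro s
      simp only [Pi.zero_apply]
      show 2 * @inner ℝ _ _ (f (x₁ s) - f (x₂ s)) (y s) * Real.exp (2 * lam * s)
        + g s * (2 * lam * Real.exp (2 * lam * s)) ≤ 0
      have hkey : @inner ℝ _ _ (f (x₁ s) - f (x₂ s)) (y s) ≤ -lam * ‖y s‖ ^ 2 := key _ _
      have hexp : (0:ℝ) < Real.exp (2 * lam * s) := Real.exp_pos _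
      have h2 : 2 * @inner ℝ _ _ (f (x₁ s) - f (x₂ s)) (y s) + g s * (2 * lam) ≤ 0 := by
        rw [hgnorm s]; nlinarith
      nlinarith [mul_le_mul_of_nonneg_right h2 hexp.le]
  intro t ht
  have hle : h t ≤ h 0 := hanti ht
  have h0 : h 0 = ‖y 0‖ ^ 2 := by simp [hh, hgnorm 0]
  have hsq : ‖y t‖ ^ 2 ≤ (‖y 0‖ * Real.exp (-lam * t)) ^ 2 := by
    have hexp : (0:ℝ) < Real.exp (2 * lam * t) := Real.exp_pos _
    have hgt : g t * Real.exp (2 * lam * t) ≤ ‖y 0‖ ^ 2 := by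
      rw [← h0]; exact hle
    rw [hgnorm t] at hgt
    have hrw : (‖y 0‖ * Real.exp (-lam * t)) ^ 2 = ‖y 0‖ ^ 2 * Real.exp (-(2 * lam * t)) := by
      rw [mul_pow, sq (Real.exp _), ← Real.exp_add]; ring_nf
    rw [hrw, Real.exp_neg, ← div_eq_mul_inv, le_div_iff₀ hexp]
    exact hgt
  have hfinal := Real.sqrt_le_sqrt hsq
  rwa [Real.sqrt_sq (norm_nonneg _), Real.sqrt_sq (by positivity)] at hfinal
end

section
/- Consider the 2N-dimensional coupled Rayleigh–van der Pol system ẋᵢ = yᵢ + (ca/N)Σⱼ(xⱼ - xᵢ), ẏᵢ = -(αxᵢ² + βyᵢ² - γ)yᵢ - ω²xᵢ + (ca/N)Σⱼ(yⱼ - yᵢ), with α ≥ 0, β ≥ 0, ca ≥ 0, ω ≠ 0, γ < 0. Then V(x,y) = Σᵢ (xᵢ²/2 + yᵢ²/(2ω²)) is a strict Lyapunov function: V(0) = 0, V > 0 away from 0, V → ∞ as ‖(x,y)‖ → ∞, and its time derivative along solutions satisfies V̇ ≤ (γ/ω²) Σᵢ yᵢ² ≤ 0. -/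
open Finset Filter

/-- The Lyapunov function `V(x,y) = ∑ i, (xᵢ²/2 + yᵢ²/(2ω²))`. -/
noncomputable def rvdpLyapunov (ω : ℝ) (N : ℕ) (p : (Fin N → ℝ) × (Fin N → ℝ)) : ℝ :=
  ∑ i : Fin N, ((p.1 i) ^ 2 / 2 + (p.2 i) ^ 2 / (2 * ω ^ 2))

theorem rvdp_strict_lyapunov (N : ℕ) (hN : 1 ≤ N) (c a α β γ ω : ℝ)
    (hα : 0 ≤ α) (hβ : 0 ≤ β) (hca : 0 ≤ c * a) (hω : ω ≠ 0) (hγ : γ < 0) :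
    rvdpLyapunov ω N (0, 0) = 0 ∧
    (∀ p : (Fin N → ℝ) × (Fin N → ℝ), p ≠ 0 → 0 < rvdpLyapunov ω N p) ∧
    Tendsto (rvdpLyapunov ω N) (cocompact ((Fin N → ℝ) × (Fin N → ℝ))) atTop ∧
    (∀ x y : Fin N → ℝ,
      (∑ i : Fin N,
          (x i * (y i + (c * a / N) * ∑ j : Fin N, (x j - x i))
            + y i * (-(α * (x i) ^ 2 + β * (y i) ^ 2 - γ) * y i - ω ^ 2 * x i
                + (c * a / N) * ∑ j : Fin N, (y j - y i)) / ω ^ 2))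
        ≤ (γ / ω ^ 2) * ∑ i : Fin N, (y i) ^ 2 ∧
      (γ / ω ^ 2) * ∑ i : Fin N, (y i) ^ 2 ≤ 0) := by
  have hω2 : (0:ℝ) < ω ^ 2 := by positivity
  have hNpos : (0:ℝ) < (N:ℝ) := by exact_mod_cast hN
  have hterm : ∀ (p : (Fin N → ℝ) × (Fin N → ℝ)) (i : Fin N),
      0 ≤ (p.1 i) ^ 2 / 2 + (p.2 i) ^ 2 / (2 * ω ^ 2) := by
    intro p i; positivity
  refine ⟨by simp [rvdpLyapunov], ?_, ?_, ?_⟩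
  · -- positivity away from 0
    intro p hp
    by_contra hle
    push_neg at hle
    have hzero : rvdpLyapunov ω N p = 0 :=
      le_antisymm hle (Finset.sum_nonneg fun i _ => hterm p i)
    have hall := (Finset.sum_eq_zero_iff_of_nonneg fun i _ => hterm p i).mp hzero
    apply hp
    have key : ∀ i : Fin N, p.1 i = 0 ∧ p.2 i = 0 := by
      intro i
      have h := hall i (Finset.mem_univ i)
      have h1 : 0 ≤ (p.1 i) ^ 2 / 2 := by positivity
      have h2 : 0 ≤ (p.2 i) ^ 2 / (2 * ω ^ 2) := by positivity
      have e1 : (p.1 i) ^ 2 / 2 = 0 := by linarith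
      have e2 : (p.2 i) ^ 2 / (2 * ω ^ 2) = 0 := by linarith
      constructor
      · have h3 : (p.1 i) ^ 2 = 0 := by linarith
        exact pow_eq_zero_iff two_ne_zero |>.mp h3
      · have h4 : (p.2 i) ^ 2 = 0 := by
          rcases div_eq_zero_iff.mp e2 with h | h
          · exact h
          · exact absurd h (by positivity)
        exact pow_eq_zero_iff two_ne_zero |>.mp h4
    ext i
    · exact (key i).1
    · exact (key i).2
  · -- coercivity
    set m : ℝ := min (1/2) (1/(2 * ω ^ 2)) with hm
    have hmpos : 0 < m := by
      apply lt_min <;> positivity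
    have hbound : ∀ p : (Fin N → ℝ) × (Fin N → ℝ), m * ‖p‖ ^ 2 ≤ rvdpLyapunov ω N p := by
      intro p
      have hne : (Finset.univ : Finset (Fin N)).Nonempty := by
        simpa [Finset.univ_nonempty_iff, ← Fin.pos_iff_nonempty] using (by omega : 0 < N)
      have key : ∀ f : Fin N → ℝ, ∃ i : Fin N, ‖f‖ = |f i| := by
        intro f
        obtain ⟨i, _, hi⟩ := Finset.exists_mem_eq_sup Finset.univ hne (fun b => ‖f b‖₊)
        exact ⟨i, by rw [Pi.norm_def, hi]; simp [Real.norm_eq_abs]⟩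
      obtain ⟨i1, h1⟩ := key p.1
      obtain ⟨i2, h2⟩ := key p.2
      have hV1 : ∀ i, (p.1 i) ^ 2 / 2 ≤ rvdpLyapunov ω N p := by
        intro i
        calc (p.1 i)^2/2 ≤ (p.1 i) ^ 2 / 2 + (p.2 i) ^ 2 / (2 * ω ^ 2) :=
              le_add_of_nonneg_right (by positivity)
        _ ≤ _ := Finset.single_le_sum (fun j _ => hterm p j) (Finset.mem_univ i)
      have hV2 : ∀ i, (p.2 i) ^ 2 / (2 * ω ^ 2) ≤ rvdpLyapunov ω N p := by
        intro i
        calc (p.2 i)^2/(2*ω^2) ≤ (p.1 i) ^ 2 / 2 + (p.2 i) ^ 2 / (2 * ω ^ 2) :=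
              le_add_of_nonneg_left (by positivity)
        _ ≤ _ := Finset.single_le_sum (fun j _ => hterm p j) (Finset.mem_univ i)
      have hnorm : ‖p‖ = max ‖p.1‖ ‖p.2‖ := rfl
      rcases max_cases ‖p.1‖ ‖p.2‖ with ⟨heq, _⟩ | ⟨heq, _⟩
      · have hb : m * ‖p‖ ^ 2 ≤ (p.1 i1) ^ 2 / 2 := by
          rw [hnorm, heq, h1, sq_abs]
          have hle : m ≤ 1/2 := min_le_left _ _
          nlinarith [sq_nonneg (p.1 i1)]
        exact hb.trans (hV1 i1)
      · have hb : m * ‖p‖ ^ 2 ≤ (p.2 i2) ^ 2 / (2 * ω ^ 2) := by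
          rw [hnorm, heq, h2, sq_abs]
          have hle : m ≤ 1/(2 * ω^2) := min_le_right _ _
          have h0 : 0 ≤ (p.2 i2)^2 := sq_nonneg _
          calc m * (p.2 i2)^2 ≤ (1/(2*ω^2)) * (p.2 i2)^2 := by nlinarith
            _ = (p.2 i2) ^ 2 / (2 * ω ^ 2) := by ring
        exact hb.trans (hV2 i2)
    have htend : Tendsto (fun p : (Fin N → ℝ) × (Fin N → ℝ) => m * ‖p‖ ^ 2)
        (cocompact _) atTop :=
      ((tendsto_pow_atTop two_ne_zero).const_mul_atTop hmpos).comp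
        tendsto_norm_cocompact_atTop
    exact tendsto_atTop_mono hbound htend
  · -- derivative bound
    intro x y
    set Sx := ∑ j : Fin N, x j with hSx
    set Sy := ∑ j : Fin N, y j with hSy
    have hsub : ∀ z : Fin N → ℝ, ∀ i : Fin N,
        ∑ j : Fin N, (z j - z i) = (∑ j, z j) - N * z i := by
      intro z i
      rw [Finset.sum_sub_distrib, Finset.sum_const, Finset.card_univ, Fintype.card_fin,
        nsmul_eq_mul]
    constructor
    · have expand : (∑ i : Fin N,
          (x i * (y i + (c * a / N) * ∑ j : Fin N, (x j - x i))
            + y i * (-(α * (x i) ^ 2 + β * (y i) ^ 2 - γ) * y i - ω ^ 2 * x i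
                + (c * a / N) * ∑ j : Fin N, (y j - y i)) / ω ^ 2))
          = (c * a / N) * (Sx ^ 2 - N * ∑ i : Fin N, (x i) ^ 2)
            + (c * a / (N * ω ^ 2)) * (Sy ^ 2 - N * ∑ i : Fin N, (y i) ^ 2)
            + (∑ i : Fin N, (γ - α * (x i) ^ 2 - β * (y i) ^ 2) * (y i) ^ 2) / ω ^ 2 := by
        have step : ∀ i : Fin N,
            x i * (y i + (c * a / N) * ∑ j : Fin N, (x j - x i))
            + y i * (-(α * (x i) ^ 2 + β * (y i) ^ 2 - γ) * y i - ω ^ 2 * x i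
                + (c * a / N) * ∑ j : Fin N, (y j - y i)) / ω ^ 2
            = (c * a / N) * (x i * Sx - N * (x i) ^ 2)
              + (c * a / (N * ω ^ 2)) * (y i * Sy - N * (y i) ^ 2)
              + ((γ - α * (x i) ^ 2 - β * (y i) ^ 2) * (y i) ^ 2) / ω ^ 2 := by
          intro i
          rw [hsub x i, hsub y i, ← hSx, ← hSy]
          field_simp
          ring
        rw [Finset.sum_congr rfl (fun i _ => step i)]
        rw [Finset.sum_add_distrib, Finset.sum_add_distrib, ← Finset.sum_div,
          ← Finset.mul_sum, ← Finset.mul_sum]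
        congr 2
        · congr 1
          rw [Finset.sum_sub_distrib, ← Finset.sum_mul, ← hSx, ← Finset.mul_sum]
          ring
        · congr 1
          rw [Finset.sum_sub_distrib, ← Finset.sum_mul, ← hSy, ← Finset.mul_sum]
          ring
      rw [expand]
      have hcs1 : Sx ^ 2 - N * ∑ i : Fin N, (x i) ^ 2 ≤ 0 := by
        have h := sq_sum_le_card_mul_sum_sq (s := (Finset.univ : Finset (Fin N))) (f := x)
        simp only [Finset.card_univ, Fintype.card_fin] at h
        linarith
      have hcs2 : Sy ^ 2 - N * ∑ i : Fin N, (y i) ^ 2 ≤ 0 := by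
        have h := sq_sum_le_card_mul_sum_sq (s := (Finset.univ : Finset (Fin N))) (f := y)
        simp only [Finset.card_univ, Fintype.card_fin] at h
        linarith
      have ht1 : (c * a / N) * (Sx ^ 2 - N * ∑ i : Fin N, (x i) ^ 2) ≤ 0 :=
        mul_nonpos_of_nonneg_of_nonpos (by positivity) hcs1
      have ht2 : (c * a / (N * ω ^ 2)) * (Sy ^ 2 - N * ∑ i : Fin N, (y i) ^ 2) ≤ 0 :=
        mul_nonpos_of_nonneg_of_nonpos (by positivity) hcs2
      have ht3 : (∑ i : Fin N, (γ - α * (x i) ^ 2 - β * (y i) ^ 2) * (y i) ^ 2) / ω ^ 2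
          ≤ (γ / ω ^ 2) * ∑ i : Fin N, (y i) ^ 2 := by
        have hsum : (∑ i : Fin N, (γ - α * (x i) ^ 2 - β * (y i) ^ 2) * (y i) ^ 2)
            ≤ ∑ i : Fin N, γ * (y i) ^ 2 := by
          apply Finset.sum_le_sum
          intro i _
          have hnn : 0 ≤ (α * (x i) ^ 2 + β * (y i) ^ 2) * (y i) ^ 2 :=
            mul_nonneg (add_nonneg (mul_nonneg hα (sq_nonneg _))
              (mul_nonneg hβ (sq_nonneg _))) (sq_nonneg _)
          nlinarith
        have heq : (γ / ω ^ 2) * ∑ i : Fin N, (y i) ^ 2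
            = (∑ i : Fin N, γ * (y i) ^ 2) / ω ^ 2 := by
          rw [← Finset.mul_sum]; ring
        rw [heq]
        exact div_le_div_of_nonneg_right hsum hω2.le
      linarith
    · have hsumnn : 0 ≤ ∑ i : Fin N, (y i) ^ 2 := Finset.sum_nonneg fun i _ => sq_nonneg _
      have hdiv : γ / ω ^ 2 ≤ 0 := div_nonpos_of_nonpos_of_nonneg hγ.le hω2.le
      exact mul_nonpos_of_nonpos_of_nonneg hdiv hsumnn
end

section
/- Let g(x,y) = c²a² - caγ + caα x² + 3caβ y² - α²x²y², and suppose ca > max{γ, 0}, α ≠ 0, α > 3β, r² ≤ (caα - 3caβ)/α², and 3βr² > γ - ca. Then g(x,y) > 0 for all (x,y) with x² + y² ≤ r². -/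
theorem contraction_region_case2 (c a α β γ r : ℝ) (hr : 0 < r)
    (hca0 : 0 < c * a) (hcaγ : γ < c * a) (hα : α ≠ 0) (hαβ : 3 * β < α)
    (hr2 : r ^ 2 ≤ (c * a * α - 3 * c * a * β) / α ^ 2)
    (hβr : γ - c * a < 3 * β * r ^ 2) :
    ∀ x y : ℝ, x ^ 2 + y ^ 2 ≤ r ^ 2 →
      0 < c ^ 2 * a ^ 2 - c * a * γ + c * a * α * x ^ 2 + 3 * c * a * β * y ^ 2
          - α ^ 2 * x ^ 2 * y ^ 2 := by
  intro x y hxy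
  have hα2 : (0:ℝ) < α ^ 2 := by positivity
  have h1 : α ^ 2 * r ^ 2 ≤ c * a * α - 3 * c * a * β := by
    have := (le_div_iff₀ hα2).mp hr2
    nlinarith
  have hy2 : y ^ 2 ≤ r ^ 2 := by nlinarith [sq_nonneg x]
  have hcoef : 3 * (c * a) * β ≤ c * a * α - α ^ 2 * y ^ 2 := by
    nlinarith [mul_le_mul_of_nonneg_left hy2 hα2.le]
  have hkey : 0 ≤ x ^ 2 * (c * a * α - α ^ 2 * y ^ 2 - 3 * (c * a) * β) :=
    mul_nonneg (sq_nonneg x) (by linarith)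
  rcases le_or_gt 0 β with hβ | hβ
  · nlinarith [sq_nonneg x, sq_nonneg y, mul_nonneg hβ (sq_nonneg y), mul_nonneg hβ (sq_nonneg x)]
  · nlinarith [mul_nonneg (by linarith : (0:ℝ) ≤ -(3*β)) (by linarith : (0:ℝ) ≤ r^2 - (x^2+y^2))]
end

section
/- Let g(x,y) = c²a² - caγ + caα x² + 3caβ y² - α²x²y², and suppose ca > max{γ, 0}, α ≠ 0, 3caαβ + α²(ca - γ) > 0, r² ≥ max{(caα - 3caβ)/α², (3caβ - caα)/α²}, and (caα + 3caβ - 2√(3c²a²αβ + α²ca(ca - γ)))/α² < r² < (caα + 3caβ + 2√(3c²a²αβ + α²ca(ca - γ)))/α². Then g(x,y) > 0 for every (x,y) with x² + y² ≤ r². -/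
set_option maxHeartbeats 1000000 in
theorem contraction_region_case4 (c a α β γ r : ℝ) (hr : 0 < r)
    (hca0 : 0 < c * a) (hcaγ : γ < c * a) (hα : α ≠ 0)
    (hpos : 0 < 3 * c * a * α * β + α ^ 2 * (c * a - γ))
    (hr2 : max ((c * a * α - 3 * c * a * β) / α ^ 2)
        ((3 * c * a * β - c * a * α) / α ^ 2) ≤ r ^ 2)
    (hlo : (c * a * α + 3 * c * a * β
        - 2 * Real.sqrt (3 * c ^ 2 * a ^ 2 * α * β + α ^ 2 * c * a * (c * a - γ))) / α ^ 2
        < r ^ 2)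
    (hhi : r ^ 2 < (c * a * α + 3 * c * a * β
        + 2 * Real.sqrt (3 * c ^ 2 * a ^ 2 * α * β + α ^ 2 * c * a * (c * a - γ))) / α ^ 2) :
    ∀ x y : ℝ, x ^ 2 + y ^ 2 ≤ r ^ 2 →
      0 < c ^ 2 * a ^ 2 - c * a * γ + c * a * α * x ^ 2 + 3 * c * a * β * y ^ 2
          - α ^ 2 * x ^ 2 * y ^ 2 := by
  intro x y hxy
  have hα2 : (0:ℝ) < α ^ 2 := by positivity
  have hK : 0 < c ^ 2 * a ^ 2 - c * a * γ := by nlinarith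
  have hD : 0 < 3 * c ^ 2 * a ^ 2 * α * β + α ^ 2 * c * a * (c * a - γ) := by nlinarith
  set S := Real.sqrt (3 * c ^ 2 * a ^ 2 * α * β + α ^ 2 * c * a * (c * a - γ)) with hSdef
  have hS2 : S ^ 2 = 3 * c ^ 2 * a ^ 2 * α * β + α ^ 2 * c * a * (c * a - γ) :=
    Real.sq_sqrt hD.le
  have hSpos : 0 < S := Real.sqrt_pos.mpr hD
  have h1 : c * a * α + 3 * c * a * β - 2 * S < α ^ 2 * r ^ 2 := by
    have := (div_lt_iff₀ hα2).mp hlo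
    linarith
  have h2 : α ^ 2 * r ^ 2 < c * a * α + 3 * c * a * β + 2 * S := by
    have := (lt_div_iff₀ hα2).mp hhi
    linarith
  have hu : 0 ≤ x ^ 2 := sq_nonneg x
  have hv : 0 ≤ y ^ 2 := sq_nonneg y
  -- positivity of α²K + B·α²r² where B = 3caβ
  have hB : 0 < α ^ 2 * (c ^ 2 * a ^ 2 - c * a * γ) + 3 * c * a * β * (α ^ 2 * r ^ 2) := by
    rcases le_or_gt 0 (3 * c * a * β) with h | h
    · nlinarith [mul_pos hα2 hK, mul_pos (mul_pos hr hr) hα2]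
    · nlinarith [sq_nonneg (S + 3 * c * a * β), hS2, h2]
  -- endpoint: K + B·y² > 0 for y² ≤ r²
  have hP1 : 0 < c ^ 2 * a ^ 2 - c * a * γ + 3 * c * a * β * y ^ 2 := by
    have hvr : y ^ 2 ≤ r ^ 2 := by nlinarith
    rcases le_or_gt 0 (3 * c * a * β) with h | h
    · nlinarith [mul_nonneg h hv]
    · have hend : 0 < c ^ 2 * a ^ 2 - c * a * γ + 3 * c * a * β * r ^ 2 := by
        nlinarith [hB, hα2]
      nlinarith [mul_nonneg (by linarith : (0:ℝ) ≤ -(3 * c * a * β))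
        (by linarith : (0:ℝ) ≤ r ^ 2 - y ^ 2)]
  -- discriminant condition
  have hkey : (α ^ 2 * r ^ 2 - (c * a * α + 3 * c * a * β)) ^ 2
      < 4 * (3 * c ^ 2 * a ^ 2 * α * β + α ^ 2 * c * a * (c * a - γ)) := by
    nlinarith [hS2, mul_pos
      (by linarith : (0:ℝ) < c * a * α + 3 * c * a * β + 2 * S - α ^ 2 * r ^ 2)
      (by linarith : (0:ℝ) < α ^ 2 * r ^ 2 - (c * a * α + 3 * c * a * β - 2 * S))]
  -- hypotenuse value φ(v) = g(r² - v, v) is positive for all v = y²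
  have hφ : 0 < c ^ 2 * a ^ 2 - c * a * γ + c * a * α * (r ^ 2 - y ^ 2)
      + 3 * c * a * β * y ^ 2 - α ^ 2 * (r ^ 2 - y ^ 2) * y ^ 2 := by
    nlinarith [hkey, sq_nonneg (2 * α ^ 2 * y ^ 2
      + (3 * c * a * β - c * a * α - α ^ 2 * r ^ 2)), hα2]
  have hvr : y ^ 2 ≤ r ^ 2 := by nlinarith
  rcases lt_or_eq_of_le hvr with hlt | heq
  · have hlt' : 0 < r ^ 2 - y ^ 2 := by linarith
    rcases hu.lt_or_eq with hupos | hu0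
    · have hnum : 0 < (r ^ 2 - y ^ 2) * (c ^ 2 * a ^ 2 - c * a * γ + c * a * α * x ^ 2
          + 3 * c * a * β * y ^ 2 - α ^ 2 * x ^ 2 * y ^ 2) := by
        have hP : 0 ≤ (r ^ 2 - y ^ 2 - x ^ 2) *
            (c ^ 2 * a ^ 2 - c * a * γ + 3 * c * a * β * y ^ 2) :=
          mul_nonneg (by linarith) hP1.le
        have hQ : 0 < x ^ 2 * (c ^ 2 * a ^ 2 - c * a * γ + c * a * α * (r ^ 2 - y ^ 2)
            + 3 * c * a * β * y ^ 2 - α ^ 2 * (r ^ 2 - y ^ 2) * y ^ 2) := mul_pos hupos hφ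
        nlinarith [hP, hQ]
      nlinarith [hnum, hlt']
    · nlinarith [hP1, hu0.symm]
  · have hx0 : x ^ 2 = 0 := by nlinarith
    have hx : x = 0 := by
      simpa using (pow_eq_zero_iff (two_ne_zero)).mp hx0
    subst hx
    nlinarith [hP1]
end
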